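/- The partial transpose ρ₅₅^{T_B} of ρ₅₅ has rank 5. -/

import Mathlib

open Matrix ComplexOrder

noncomputable def M55 : Matrix (Fin 9) (Fin 9) ℂ :=
  !![0, 0, 0, 0, 0, 0, 0, 0, 0;
     0, 2, -1, 0, 0, 0, 0, 0, 1;
     0, -1, 1, 0, 0, 0, 0, 0, -1;
     0, 0, 0, 3, 0, -1, -1, 0, 0;
     0, 0, 0, 0, 0, 0, 0, 0, 0;
     0, 0, 0, -1, 0, 1, 1, 0, 0;
     0, 0, 0, -1, 0, 1, 1, 0, 0;
     0, 0, 0, 0, 0, 0, 0, 2, -2;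
     0, 1, -1, 0, 0, 0, 0, -2, 3]

/-- The index map `(i, j) ↦ 3 i + j` from `Fin 3 × Fin 3` to `Fin 9`. -/
def idx (p : Fin 3 × Fin 3) : Fin 9 :=
  ⟨3 * p.1.val + p.2.val, by have h1 := p.1.isLt; have h2 := p.2.isLt; omega⟩

/-- The state `ρ₅₅`, viewed as an operator on `ℂ³ ⊗ ℂ³`. -/
noncomputable def rho55 : Matrix (Fin 3 × Fin 3) (Fin 3 × Fin 3) ℂ :=
  fun p q => (1 / 13 : ℂ) * M55 (idx p) (idx q)

/-- The partial transpose on the second factor: `(ρ^{T_B})_{(i,j),(k,l)} = ρ_{(i,l),(k,j)}`. -/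
noncomputable def ptrans (ρ : Matrix (Fin 3 × Fin 3) (Fin 3 × Fin 3) ℂ) :
    Matrix (Fin 3 × Fin 3) (Fin 3 × Fin 3) ℂ :=
  fun p q => ρ (p.1, q.2) (q.1, p.2)

@[simp] lemma cons_val_five' {α : Type*} (x : α) (u : Fin 8 → α) :
    vecCons x u (5 : Fin 9) = vecHead (vecTail (vecTail (vecTail (vecTail u)))) := rfl
@[simp] lemma cons_val_six' {α : Type*} (x : α) (u : Fin 8 → α) :
    vecCons x u (6 : Fin 9) = vecHead (vecTail (vecTail (vecTail (vecTail (vecTail u))))) := rfl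
@[simp] lemma cons_val_seven' {α : Type*} (x : α) (u : Fin 8 → α) :
    vecCons x u (7 : Fin 9) = vecHead (vecTail (vecTail (vecTail (vecTail (vecTail (vecTail u)))))) := rfl
@[simp] lemma cons_val_eight' {α : Type*} (x : α) (u : Fin 8 → α) :
    vecCons x u (8 : Fin 9) = vecHead (vecTail (vecTail (vecTail (vecTail (vecTail (vecTail (vecTail u))))))) := rfl
@[simp] lemma vecHead_const {α : Type*} {n : ℕ} (a : α) :
    vecHead (fun _ : Fin (n+1) => a) = a := rfl
@[simp] lemma vecTail_const {α : Type*} {n : ℕ} (a : α) :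
    vecTail (fun _ : Fin (n+1) => a) = fun _ : Fin n => a := rfl
@[simp] lemma fin3_mk_zero (h : 0 < 3) : (⟨0, h⟩ : Fin 3) = 0 := rfl
@[simp] lemma fin3_mk_one (h : 1 < 3) : (⟨1, h⟩ : Fin 3) = 1 := rfl
@[simp] lemma fin3_mk_two (h : 2 < 3) : (⟨2, h⟩ : Fin 3) = 2 := rfl
@[simp] lemma idx00 : idx (0, 0) = 0 := rfl
@[simp] lemma idxp0 : idx 0 = 0 := rfl
@[simp] lemma idxp1 : idx 1 = 4 := rfl
@[simp] lemma idx01 : idx (0, 1) = 1 := rfl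
@[simp] lemma idx02 : idx (0, 2) = 2 := rfl
@[simp] lemma idx10 : idx (1, 0) = 3 := rfl
@[simp] lemma idx11 : idx (1, 1) = 4 := rfl
@[simp] lemma idx12 : idx (1, 2) = 5 := rfl
@[simp] lemma idx20 : idx (2, 0) = 6 := rfl
@[simp] lemma idx21 : idx (2, 1) = 7 := rfl
@[simp] lemma idx22 : idx (2, 2) = 8 := rfl

/-- The matrix of `13 • ptrans rho55`, written over the index `Fin 9`. -/
noncomputable def Npt : Matrix (Fin 9) (Fin 9) ℂ :=
  !![0, 0, 0, 0, 0, 0, 0, 0, 0;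
     0, 2, -1, 0, 0, 0, 0, 0, 0;
     0, -1, 1, 0, 0, 0, 0, 1, -1;
     0, 0, 0, 3, 0, -1, -1, 0, 1;
     0, 0, 0, 0, 0, 0, 0, 0, 0;
     0, 0, 0, -1, 0, 1, 0, 0, 0;
     0, 0, 0, -1, 0, 0, 1, 0, 0;
     0, 0, 1, 0, 0, 0, 0, 2, -2;
     0, 0, -1, 1, 0, 0, 0, -2, 3]

noncomputable def Cfac : Matrix (Fin 9) (Fin 5) ℂ :=
  !![0, 0, 0, 0, 0;
     2, -1, 0, 0, 0;
     -1, 1, 0, 0, 0;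
     0, 0, 3, -1, -1;
     0, 0, 0, 0, 0;
     0, 0, -1, 1, 0;
     0, 0, -1, 0, 1;
     0, 1, 0, 0, 0;
     0, -1, 1, 0, 0]

noncomputable def Bfac : Matrix (Fin 5) (Fin 9) ℂ :=
  !![0, 1, 0, 0, 0, 0, 0, 1, -1;
     0, 0, 1, 0, 0, 0, 0, 2, -2;
     0, 0, 0, 1, 0, 0, 0, 0, 1;
     0, 0, 0, 0, 0, 1, 0, 0, 1;
     0, 0, 0, 0, 0, 0, 1, 0, 1]

noncomputable def Psel : Matrix (Fin 5) (Fin 9) ℂ :=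
  !![0, 1, 0, 0, 0, 0, 0, 0, 0;
     0, 0, 1, 0, 0, 0, 0, 0, 0;
     0, 0, 0, 1, 0, 0, 0, 0, 0;
     0, 0, 0, 0, 0, 1, 0, 0, 0;
     0, 0, 0, 0, 0, 0, 1, 0, 0]

noncomputable def Qsel : Matrix (Fin 9) (Fin 5) ℂ :=
  !![0, 0, 0, 0, 0;
     1, 0, 0, 0, 0;
     0, 1, 0, 0, 0;
     0, 0, 1, 0, 0;
     0, 0, 0, 0, 0;
     0, 0, 0, 1, 0;
     0, 0, 0, 0, 1;
     0, 0, 0, 0, 0;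
     0, 0, 0, 0, 0]

noncomputable def Ssub : Matrix (Fin 5) (Fin 5) ℂ :=
  !![2, -1, 0, 0, 0;
     -1, 1, 0, 0, 0;
     0, 0, 3, -1, -1;
     0, 0, -1, 1, 0;
     0, 0, -1, 0, 1]

noncomputable def Sinv : Matrix (Fin 5) (Fin 5) ℂ :=
  !![1, 1, 0, 0, 0;
     1, 2, 0, 0, 0;
     0, 0, 1, 1, 1;
     0, 0, 1, 2, 1;
     0, 0, 1, 1, 2]

/-- The equivalence `Fin 3 × Fin 3 ≃ Fin 9` induced by `idx`. -/
noncomputable def idxEquiv : Fin 3 × Fin 3 ≃ Fin 9 :=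
  Equiv.ofBijective idx (by decide)

set_option maxHeartbeats 1000000 in
lemma ptrans_eq : ptrans rho55 = (1 / 13 : ℂ) • Npt.submatrix idxEquiv idxEquiv := by
  ext p q
  show (1 / 13 : ℂ) * M55 (idx (p.1, q.2)) (idx (q.1, p.2))
      = (1 / 13 : ℂ) * Npt (idxEquiv p) (idxEquiv q)
  show (1 / 13 : ℂ) * M55 (idx (p.1, q.2)) (idx (q.1, p.2))
      = (1 / 13 : ℂ) * Npt (idx p) (idx q)
  congr 1
  fin_cases p <;> fin_cases q <;> simp [M55, Npt]

set_option maxHeartbeats 1000000 in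
lemma Npt_factor : Npt = Cfac * Bfac := by
  ext i j
  fin_cases i <;> fin_cases j <;>
    simp [Npt, Cfac, Bfac, Matrix.mul_apply, Fin.sum_univ_five] <;> norm_num

set_option maxHeartbeats 1000000 in
lemma Ssub_eq : Psel * Npt * Qsel = Ssub := by
  ext i j
  fin_cases i <;> fin_cases j <;>
    simp [Npt, Psel, Qsel, Ssub, Matrix.mul_apply, Fin.sum_univ_succ, Fin.sum_univ_five]

set_option maxHeartbeats 1000000 in
lemma Ssub_isUnit : IsUnit Ssub := by
  apply (Matrix.isUnit_iff_isUnit_det _).mpr (Matrix.isUnit_det_of_right_inverse (B := Sinv) ?_)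
  ext i j
  fin_cases i <;> fin_cases j <;>
    simp [Ssub, Sinv, Matrix.mul_apply, Fin.sum_univ_five, Matrix.one_apply, Fin.ext_iff] <;> norm_num

lemma Npt_rank : Npt.rank = 5 := by
  refine le_antisymm ?_ ?_
  · calc Npt.rank = (Cfac * Bfac).rank := by rw [Npt_factor]
    _ ≤ Cfac.rank := rank_mul_le_left _ _
    _ ≤ 5 := by simpa using Cfac.rank_le_card_width
  · calc (5 : ℕ) = Ssub.rank := by
          rw [Ssub.rank_of_isUnit Ssub_isUnit]; simp
    _ = (Psel * Npt * Qsel).rank := by rw [Ssub_eq]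
    _ ≤ (Npt * Qsel).rank := by
          rw [Matrix.mul_assoc]; exact rank_mul_le_right _ _
    _ ≤ Npt.rank := rank_mul_le_left _ _

lemma smul_one_det {n : Type*} [Fintype n] [DecidableEq n] :
    IsUnit ((1 / 13 : ℂ) • (1 : Matrix n n ℂ)).det := by
  apply Matrix.isUnit_det_of_right_inverse (B := (13 : ℂ) • 1)
  rw [Matrix.smul_mul, Matrix.mul_smul, one_mul, smul_smul]
  norm_num

/-- The partial transpose of `ρ₅₅` has rank 5. -/
theorem rho55_ptrans_rank : (ptrans rho55).rank = 5 := by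
  rw [ptrans_eq]
  have h : (1 / 13 : ℂ) • Npt.submatrix idxEquiv idxEquiv
      = ((1 / 13 : ℂ) • (1 : Matrix (Fin 3 × Fin 3) (Fin 3 × Fin 3) ℂ)) *
        Npt.submatrix idxEquiv idxEquiv := by
    rw [Matrix.smul_mul, one_mul]
  rw [h, Matrix.rank_mul_eq_right_of_isUnit_det _ _ smul_one_det, Matrix.rank_submatrix, Npt_rank]
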